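/- arXiv:1008.5137 — 5 statements merged into one kernel-verified Lean document; each statement's English description precedes it below -/
import Mathlib

section
/- With F as above, the Fourier transform of F satisfies F̂(ω) = −(1/ω) f̂(ω) for all ω ≠ 0, where f̂ is the Fourier transform of f. -/
open MeasureTheory Complex

noncomputable def chi (t u : ℝ) : ℂ :=
  (if u < t ∧ t < 0 then 1 else 0) - (if 0 ≤ t ∧ t < u then 1 else 0)

lemma chi_neg {t : ℝ} (ht : t < 0) (u : ℝ) : chi t u = if u < t then 1 else 0 := by
  simp [chi, ht, not_le.2 ht]

lemma chi_nonneg {t : ℝ} (ht : 0 ≤ t) (u : ℝ) : chi t u = -(if t < u then 1 else 0) := by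
  have : ¬ (u < t ∧ t < 0) := by rintro ⟨_, h⟩; exact absurd h (not_lt.2 ht)
  simp [chi, this, ht]

lemma measurable_chi : Measurable fun p : ℝ × ℝ => chi p.1 p.2 := by
  unfold chi
  apply Measurable.sub
  · exact Measurable.ite (MeasurableSet.inter
      (measurableSet_lt measurable_snd measurable_fst)
      (measurableSet_lt measurable_fst measurable_const)) measurable_const measurable_const
  · exact Measurable.ite (MeasurableSet.inter
      (measurableSet_le measurable_const measurable_fst)
      (measurableSet_lt measurable_fst measurable_snd)) measurable_const measurable_const

lemma exp_chi_neg {ω u : ℝ} (hu : u < 0) :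
    (fun t : ℝ => Complex.exp (Complex.I * ω * t) * chi t u)
      = Set.indicator (Set.Ioo u 0) (fun t : ℝ => Complex.exp (Complex.I * ω * t)) := by
  funext t
  rcases lt_or_ge t 0 with ht | ht
  · rw [chi_neg ht]
    by_cases h : u < t
    · simp [Set.indicator, h, ht]
    · simp [Set.indicator, h, ht]
  · rw [chi_nonneg ht]
    have h1 : ¬ (t < u) := not_lt.2 (hu.le.trans ht)
    have h2 : t ∉ Set.Ioo u 0 := by simp [Set.mem_Ioo]; intro; linarith
    simp [Set.indicator, h1, h2]

lemma exp_chi_nonneg {ω u : ℝ} (hu : 0 ≤ u) :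
    (fun t : ℝ => Complex.exp (Complex.I * ω * t) * chi t u)
      = Set.indicator (Set.Ico 0 u) (fun t : ℝ => -Complex.exp (Complex.I * ω * t)) := by
  funext t
  rcases lt_or_ge t 0 with ht | ht
  · rw [chi_neg ht]
    have h1 : ¬ (u < t) := not_lt.2 (ht.le.trans hu)
    have h2 : t ∉ Set.Ico 0 u := by simp [Set.mem_Ico]; intro; linarith
    simp [Set.indicator, h1, h2]
  · rw [chi_nonneg ht]
    by_cases h : t < u
    · simp [Set.indicator, h, ht]
    · simp [Set.indicator, h, ht]

lemma cont_exp (ω : ℝ) : Continuous fun t : ℝ => Complex.exp (Complex.I * ω * t) := by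
  fun_prop

lemma norm_exp_I (ω t : ℝ) : ‖Complex.exp (Complex.I * ω * t)‖ = 1 := by
  have h : (Complex.I * ω * t : ℂ) = ((ω * t : ℝ) : ℂ) * Complex.I := by push_cast; ring
  rw [h, Complex.norm_exp_ofReal_mul_I]

lemma intg_t (ω : ℝ) (c : ℂ) (u : ℝ) :
    Integrable (fun t : ℝ => Complex.exp (Complex.I * ω * t) * (c * chi t u)) := by
  have heq : (fun t : ℝ => Complex.exp (Complex.I * ω * t) * (c * chi t u))
      = fun t : ℝ => c * (Complex.exp (Complex.I * ω * t) * chi t u) := by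
    funext t; ring
  rw [heq]
  apply Integrable.const_mul
  rcases lt_or_ge u 0 with hu | hu
  · rw [exp_chi_neg hu, integrable_indicator_iff measurableSet_Ioo]
    exact ((cont_exp ω).integrableOn_Icc).mono_set Set.Ioo_subset_Icc_self
  · rw [exp_chi_nonneg hu, integrable_indicator_iff measurableSet_Ico]
    exact ((cont_exp ω).neg.integrableOn_Icc).mono_set Set.Ico_subset_Icc_self

lemma norm_int (ω : ℝ) (c : ℂ) (u : ℝ) :
    ∫ t : ℝ, ‖Complex.exp (Complex.I * ω * t) * (c * chi t u)‖ = ‖c‖ * |u| := by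
  have h1 : (fun t : ℝ => ‖Complex.exp (Complex.I * ω * t) * (c * chi t u)‖)
      = fun t : ℝ => ‖c‖ * ‖Complex.exp (Complex.I * ω * t) * chi t u‖ := by
    funext t
    rw [norm_mul, norm_mul, norm_mul, norm_exp_I, one_mul]
    ring
  rw [h1, MeasureTheory.integral_const_mul]
  congr 1
  rcases lt_or_ge u 0 with hu | hu
  · have h3 : ∀ a : ℝ, ‖Complex.exp (Complex.I * ω * a) * chi a u‖
        = Set.indicator (Set.Ioo u 0) (fun _ : ℝ => (1:ℝ)) a := by
      intro a
      rw [congrFun (exp_chi_neg (ω := ω) hu) a, norm_indicator_eq_indicator_norm]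
      by_cases h : a ∈ Set.Ioo u 0 <;> simp [h, norm_exp_I]
    simp_rw [h3]
    rw [MeasureTheory.integral_indicator_const _ measurableSet_Ioo]
    rw [measureReal_def, Real.volume_Ioo, smul_eq_mul, mul_one, ENNReal.toReal_ofReal (by linarith), abs_of_neg hu]
    ring
  · have h3 : ∀ a : ℝ, ‖Complex.exp (Complex.I * ω * a) * chi a u‖
        = Set.indicator (Set.Ico 0 u) (fun _ : ℝ => (1:ℝ)) a := by
      intro a
      rw [congrFun (exp_chi_nonneg (ω := ω) hu) a, norm_indicator_eq_indicator_norm]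
      by_cases h : a ∈ Set.Ico 0 u <;> simp [h, norm_exp_I]
    simp_rw [h3]
    rw [MeasureTheory.integral_indicator_const _ measurableSet_Ico]
    rw [measureReal_def, Real.volume_Ico, smul_eq_mul, mul_one, sub_zero, ENNReal.toReal_ofReal hu, _root_.abs_of_nonneg hu]

lemma intg_prod {f : ℝ → ℂ} (hf : Integrable f)
    (hf1 : Integrable (fun u : ℝ => (u : ℂ) * f u)) (ω : ℝ) :
    Integrable (Function.uncurry fun (u t : ℝ) =>
      Complex.exp (Complex.I * ω * t) * (f u * chi t u))
      ((volume : Measure ℝ).prod volume) := by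
  have hmeas : AEStronglyMeasurable (Function.uncurry fun (u t : ℝ) =>
      Complex.exp (Complex.I * ω * t) * (f u * chi t u))
      ((volume : Measure ℝ).prod volume) := by
    apply AEStronglyMeasurable.mul
    · exact ((cont_exp ω).comp continuous_snd).aestronglyMeasurable
    · apply AEStronglyMeasurable.mul
      · exact hf.1.comp_quasiMeasurePreserving
          MeasureTheory.Measure.quasiMeasurePreserving_fst
      · exact ((measurable_chi.comp measurable_swap).aestronglyMeasurable)
  rw [MeasureTheory.integrable_prod_iff hmeas]
  constructor
  · exact Filter.Eventually.of_forall fun u => intg_t ω (f u) u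
  · apply Integrable.congr (g := fun u => ∫ t : ℝ,
      ‖Complex.exp (Complex.I * ω * t) * (f u * chi t u)‖)
    · have : Integrable (fun u : ℝ => ‖f u‖ * |u|) := by
        apply hf1.norm.congr
        filter_upwards with u
        simp [abs_mul, mul_comm]
      exact this.congr (Filter.Eventually.of_forall fun u => (norm_int ω (f u) u).symm)
    · exact Filter.Eventually.of_forall fun u => rfl
lemma inner_eq {f : ℝ → ℂ} (hf : Integrable f) (hzero : ∫ u, f u = 0) (t : ℝ) :
    ∫ u, f u * (Real.sign (t - u) : ℂ) = 2 * ∫ u, f u * chi t u := by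
  have hae : ∀ᵐ u : ℝ, u ≠ t := by
    rw [MeasureTheory.ae_iff]
    have : {u : ℝ | ¬ u ≠ t} = {t} := by ext u; simp
    rw [this]; exact Real.volume_singleton
  rcases lt_or_ge t 0 with ht | ht
  · have hchi : (fun u => f u * chi t u) = Set.indicator (Set.Iio t) f := by
      funext u
      rw [chi_neg ht]
      by_cases h : u < t <;> simp [h, Set.indicator, Set.mem_Iio]
    have hint : Integrable fun u => f u * chi t u := by
      rw [hchi]; exact hf.indicator measurableSet_Iio
    have hcg : (fun u => f u * (Real.sign (t-u) : ℂ)) =ᵐ[volume]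
        fun u => 2 * (f u * chi t u) - f u := by
      filter_upwards [hae] with u hu
      rcases lt_or_gt_of_ne hu with h | h
      · rw [chi_neg ht, if_pos h, Real.sign_of_pos (by linarith)]
        push_cast; ring
      · rw [chi_neg ht, if_neg (not_lt.2 h.le), Real.sign_of_neg (by linarith)]
        push_cast; ring
    rw [integral_congr_ae hcg, integral_sub (hint.const_mul 2) hf, MeasureTheory.integral_const_mul,
      hzero, sub_zero]
  · have hchi : (fun u => f u * chi t u) = fun u => -(Set.indicator (Set.Ioi t) f u) := by
      funext u
      rw [chi_nonneg ht]
      by_cases h : t < u <;> simp [h, Set.indicator, Set.mem_Ioi]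
    have hint : Integrable fun u => f u * chi t u := by
      rw [hchi]; exact (hf.indicator measurableSet_Ioi).neg
    have hcg : (fun u => f u * (Real.sign (t-u) : ℂ)) =ᵐ[volume]
        fun u => 2 * (f u * chi t u) + f u := by
      filter_upwards [hae] with u hu
      rcases lt_or_gt_of_ne hu with h | h
      · rw [chi_nonneg ht, if_neg (not_lt.2 h.le), Real.sign_of_pos (by linarith)]
        push_cast; ring
      · rw [chi_nonneg ht, if_pos h, Real.sign_of_neg (by linarith)]
        push_cast; ring
    rw [integral_congr_ae hcg, integral_add (hint.const_mul 2) hf, MeasureTheory.integral_const_mul,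
      hzero, add_zero]

lemma tint {ω : ℝ} (hω : ω ≠ 0) (u : ℝ) :
    ∫ t : ℝ, Complex.exp (Complex.I * ω * t) * chi t u
      = -(Complex.exp (Complex.I * ω * u) - 1) / (Complex.I * ω) := by
  have hc : (Complex.I * ω : ℂ) ≠ 0 :=
    mul_ne_zero Complex.I_ne_zero (by exact_mod_cast hω)
  rcases lt_or_ge u 0 with hu | hu
  · have hind : (fun t : ℝ => Complex.exp (Complex.I * ω * t) * chi t u)
        = Set.indicator (Set.Ioo u 0) (fun t : ℝ => Complex.exp (Complex.I * ω * t)) := by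
      funext t
      rcases lt_or_ge t 0 with ht | ht
      · rw [chi_neg ht]
        by_cases h : u < t
        · simp [Set.indicator, h, ht]
        · simp [Set.indicator, h, ht]
      · rw [chi_nonneg ht]
        have h1 : ¬ (t < u) := not_lt.2 (hu.le.trans ht)
        have h2 : t ∉ Set.Ioo u 0 := by simp [Set.mem_Ioo]; intro; linarith
        simp [Set.indicator, h1, h2]
    rw [hind, integral_indicator measurableSet_Ioo,
      ← MeasureTheory.integral_Ioc_eq_integral_Ioo,
      ← intervalIntegral.integral_of_le hu.le, integral_exp_mul_complex hc]
    simp only [Complex.ofReal_zero, mul_zero, Complex.exp_zero]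
    ring
  · have hind : (fun t : ℝ => Complex.exp (Complex.I * ω * t) * chi t u)
        = Set.indicator (Set.Ico 0 u) (fun t : ℝ => -Complex.exp (Complex.I * ω * t)) := by
      funext t
      rcases lt_or_ge t 0 with ht | ht
      · rw [chi_neg ht]
        have h1 : ¬ (u < t) := not_lt.2 (ht.le.trans hu)
        have h2 : t ∉ Set.Ico 0 u := by simp [Set.mem_Ico]; intro; linarith
        simp [Set.indicator, h1, h2]
      · rw [chi_nonneg ht]
        by_cases h : t < u
        · simp [Set.indicator, h, ht]
        · simp [Set.indicator, h, ht]
    rw [hind, integral_indicator measurableSet_Ico,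
      MeasureTheory.integral_Ico_eq_integral_Ioo,
      ← MeasureTheory.integral_Ioc_eq_integral_Ioo,
      ← intervalIntegral.integral_of_le hu, intervalIntegral.integral_neg,
      integral_exp_mul_complex hc]
    simp only [Complex.ofReal_zero, mul_zero, Complex.exp_zero]
    ring

/-- Let `f : ℝ → ℂ` be even and integrable with `∫ f = 0` and `∫ |u f u| < ∞`, and
let `F t = (i/2) ∫ f u * sign (t - u) du`.  Then the Fourier transform
`F̂ ω = ∫ e^{iωt} F t dt` satisfies `F̂ ω = - f̂ ω / ω` for all `ω ≠ 0`. -/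
theorem fourier_F_eq {f : ℝ → ℂ} (hf : Integrable f)
    (hf1 : Integrable (fun u : ℝ => (u : ℂ) * f u))
    (heven : ∀ u, f (-u) = f u)
    (hzero : ∫ u, f u = 0)
    {ω : ℝ} (hω : ω ≠ 0) :
    ∫ t : ℝ, Complex.exp (Complex.I * ω * t) *
        ((Complex.I / 2) * ∫ u : ℝ, f u * (Real.sign (t - u) : ℂ)) =
      -(∫ u : ℝ, Complex.exp (Complex.I * ω * u) * f u) / (ω : ℂ) := by
  have hωc : (ω : ℂ) ≠ 0 := by exact_mod_cast hω
  have hc : (Complex.I * ω : ℂ) ≠ 0 := mul_ne_zero Complex.I_ne_zero hωc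
  have step1 : ∀ t : ℝ, Complex.exp (Complex.I * ω * t) *
      ((Complex.I / 2) * ∫ u : ℝ, f u * (Real.sign (t - u) : ℂ))
      = Complex.I * ∫ u : ℝ, Complex.exp (Complex.I * ω * t) * (f u * chi t u) := by
    intro t
    rw [inner_eq hf hzero t, MeasureTheory.integral_const_mul]
    ring
  simp_rw [step1]
  rw [MeasureTheory.integral_const_mul]
  have hswap : (∫ t : ℝ, ∫ u : ℝ, Complex.exp (Complex.I * ω * t) * (f u * chi t u))
      = ∫ u : ℝ, ∫ t : ℝ, Complex.exp (Complex.I * ω * t) * (f u * chi t u) := by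
    rw [← MeasureTheory.integral_integral_swap (intg_prod hf hf1 ω)]
  rw [hswap]
  have step2 : ∀ u : ℝ, (∫ t : ℝ, Complex.exp (Complex.I * ω * t) * (f u * chi t u))
      = (-(1 / (Complex.I * ω))) * (f u * (Complex.exp (Complex.I * ω * u) - 1)) := by
    intro u
    have : (fun t : ℝ => Complex.exp (Complex.I * ω * t) * (f u * chi t u))
        = fun t : ℝ => f u * (Complex.exp (Complex.I * ω * t) * chi t u) := by
      funext t; ring
    rw [this, MeasureTheory.integral_const_mul, tint hω u]
    field_simp
  simp_rw [step2]
  rw [MeasureTheory.integral_const_mul]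
  have hiE : Integrable (fun u : ℝ => Complex.exp (Complex.I * ω * u) * f u) := by
    apply hf.bdd_mul ((cont_exp ω).aestronglyMeasurable)
    exact Filter.Eventually.of_forall fun u => le_of_eq (norm_exp_I ω u)
  have step3 : (∫ u : ℝ, f u * (Complex.exp (Complex.I * ω * u) - 1))
      = ∫ u : ℝ, Complex.exp (Complex.I * ω * u) * f u := by
    have : (fun u : ℝ => f u * (Complex.exp (Complex.I * ω * u) - 1))
        = fun u : ℝ => Complex.exp (Complex.I * ω * u) * f u - f u := by
      funext u; ring
    rw [this, MeasureTheory.integral_sub hiE hf, hzero, sub_zero]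
  rw [step3]
  field_simp
end

section
/- Suppose a Hamiltonian H_s depends smoothly on s, has nondegenerate ground state ψ₀(s) with energy E₀(s), and a spectral gap: all other eigenvalues E_i(s) satisfy |E_i(s) − E₀(s)| ≥ ΔE. Let F : ℝ → ℂ be an odd integrable function whose Fourier transform satisfies F̂(ω) = −1/ω for |ω| ≥ 1, and define the quasi-adiabatic continuation operator iD_s = ∫ F(ΔE·t) e^{iH_s t} (∂_s H_s) e^{−iH_s t} dt. Then ∂_s ψ₀(s) = i D_s ψ₀(s) (with the phase convention ⟨ψ₀, ∂_s ψ₀⟩ = 0). -/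
open MeasureTheory

set_option maxHeartbeats 1000000

private lemma exp_eig {V : Type*} [NormedAddCommGroup V] [InnerProductSpace ℂ V]
    [FiniteDimensional ℂ V] (A : V →L[ℂ] V) (v : V) (μ : ℂ) (h : A v = μ • v) :
    NormedSpace.exp A v = Complex.exp μ • v := by
  have hpow : ∀ k : ℕ, (A ^ k) v = μ ^ k • v := by
    intro k
    induction k with
    | zero => simp
    | succ k ih =>
        rw [pow_succ, ContinuousLinearMap.mul_apply, h, _root_.map_smul, ih, smul_smul,
          pow_succ, mul_comm]
  have hs : Summable fun n : ℕ => ((Nat.factorial n : ℂ)⁻¹) • A ^ n :=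
    NormedSpace.expSeries_summable' (𝕂 := ℂ) A
  rw [NormedSpace.exp_eq_tsum (𝕂 := ℂ)]
  have h2 : ((ContinuousLinearMap.apply ℂ V v) (∑' n : ℕ, ((Nat.factorial n : ℂ)⁻¹) • A ^ n))
      = ∑' n : ℕ, (ContinuousLinearMap.apply ℂ V v) (((Nat.factorial n : ℂ)⁻¹) • A ^ n) :=
    (ContinuousLinearMap.apply ℂ V v).map_tsum hs
  simp only [ContinuousLinearMap.apply_apply] at h2
  show (∑' n : ℕ, ((Nat.factorial n : ℂ)⁻¹) • A ^ n) v = _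
  rw [h2]
  have h3 : ∀ n : ℕ, (((Nat.factorial n : ℂ)⁻¹) • A ^ n) v
      = (((Nat.factorial n : ℂ)⁻¹) • μ ^ n) • v := by
    intro n
    rw [ContinuousLinearMap.smul_apply, hpow, smul_smul, smul_eq_mul]
  simp_rw [h3]
  rw [(NormedSpace.expSeries_summable' (𝕂 := ℂ) μ).tsum_smul_const]
  congr 1
  rw [Complex.exp_eq_exp_ℂ, NormedSpace.exp_eq_tsum (𝕂 := ℂ)]

/-- The exact quasi-adiabatic continuation operator
`D = -i ∫ F(ΔE t) e^{iHt} (∂H) e^{-iHt} dt`. -/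
noncomputable def qaOp {V : Type*} [NormedAddCommGroup V] [InnerProductSpace ℂ V]
    [FiniteDimensional ℂ V] (F : ℝ → ℂ) (ΔE : ℝ) (Hs Hder : V →L[ℂ] V) : V →L[ℂ] V :=
  (-Complex.I) • ∫ t : ℝ, F (ΔE * t) •
    (NormedSpace.exp ((Complex.I * (t : ℂ)) • Hs) ∘L Hder ∘L
      NormedSpace.exp ((-(Complex.I * (t : ℂ))) • Hs))

/-- Quasi-adiabatic continuation: for a smooth family `H_s` of Hermitian operators
with orthonormal eigenbasis `ψ i s`, eigenvalues `En i s`, nondegenerate ground state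
`ψ 0 s` and spectral gap `ΔE`, and `F` odd and integrable with Fourier transform
`F̂(ω) = -1/ω` for `|ω| ≥ 1`, the ground state satisfies
`∂_s ψ₀(s) = i D_s ψ₀(s)` (with the phase convention `⟨ψ₀, ∂_s ψ₀⟩ = 0`). -/
theorem quasi_adiabatic_continuation {V : Type*} [NormedAddCommGroup V]
    [InnerProductSpace ℂ V] [FiniteDimensional ℂ V] (n : ℕ)
    (Hs Hder : ℝ → (V →L[ℂ] V)) (hH : ∀ s, HasDerivAt Hs (Hder s) s)
    (hherm : ∀ s, IsSelfAdjoint (Hs s))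
    (ψ : Fin (n + 1) → ℝ → V) (En : Fin (n + 1) → ℝ → ℝ)
    (hON : ∀ s, Orthonormal ℂ (fun i => ψ i s))
    (hcomplete : ∀ s (v : V), v = ∑ i, (inner ℂ (ψ i s) v : ℂ) • ψ i s)
    (heig : ∀ i s, Hs s (ψ i s) = ((En i s : ℝ) : ℂ) • ψ i s)
    (ΔE : ℝ) (hΔE : 0 < ΔE)
    (hgap : ∀ i s, i ≠ 0 → En 0 s + ΔE ≤ En i s)
    (F : ℝ → ℂ) (hFint : Integrable F) (hFodd : ∀ t, F (-t) = -F t)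
    (hFhat : ∀ ω : ℝ, 1 ≤ |ω| →
      ∫ t : ℝ, F t * Complex.exp (Complex.I * ω * t) = -1 / (ω : ℂ))
    (ψd : ℝ → V) (hψd : ∀ s, HasDerivAt (fun r => ψ 0 r) (ψd s) s)
    (hphase : ∀ s, (inner ℂ (ψ 0 s) (ψd s) : ℂ) = 0) (s : ℝ) :
    ψd s = Complex.I • (qaOp F ΔE (Hs s) (Hder s)) (ψ 0 s) := by
  classical
  -- ### Step 1: first-order perturbation theory coefficients
  have hcoef : ∀ i, i ≠ 0 → (inner ℂ (ψ i s) (ψd s) : ℂ) =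
      (inner ℂ (ψ i s) (Hder s (ψ 0 s)) : ℂ)
        / (((En 0 s : ℝ) : ℂ) - ((En i s : ℝ) : ℂ)) := by
    intro i hi
    set u := ψ i s with hu
    have hres : HasDerivAt (fun r => (Hs r).restrictScalars ℝ)
        ((Hder s).restrictScalars ℝ) s :=
      (ContinuousLinearMap.restrictScalarsIsometry ℂ V V ℝ
        ℝ).toContinuousLinearMap.hasFDerivAt.comp_hasDerivAt s (hH s)
    have h1 : HasDerivAt (fun r => Hs r (ψ 0 r)) (Hder s (ψ 0 s) + Hs s (ψd s)) s :=
      hres.clm_apply (hψd s)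
    have h2 : HasDerivAt (fun r => (innerSL ℂ u) (Hs r (ψ 0 r)))
        ((innerSL ℂ u) (Hder s (ψ 0 s) + Hs s (ψd s))) s :=
      ((innerSL ℂ u).restrictScalars ℝ).hasFDerivAt.comp_hasDerivAt s h1
    have he : HasDerivAt (fun r => (inner ℂ (ψ 0 r) (Hs r (ψ 0 r)) : ℂ))
        ((inner ℂ (ψ 0 s) (Hder s (ψ 0 s) + Hs s (ψd s)) : ℂ)
          + (inner ℂ (ψd s) (Hs s (ψ 0 s)) : ℂ)) s :=
      HasDerivAt.inner (𝕜 := ℂ) (hψd s) h1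
    have hg : HasDerivAt (fun r => (innerSL ℂ u) (ψ 0 r)) ((innerSL ℂ u) (ψd s)) s :=
      ((innerSL ℂ u).restrictScalars ℝ).hasFDerivAt.comp_hasDerivAt s (hψd s)
    have hprod := he.mul hg
    have hone : ∀ r, (inner ℂ (ψ 0 r) (ψ 0 r) : ℂ) = 1 := by
      intro r
      rw [inner_self_eq_norm_sq_to_K, (hON r).1 0]
      norm_num
    have funeq : (fun r => (innerSL ℂ u) (Hs r (ψ 0 r)))
        = fun r => (inner ℂ (ψ 0 r) (Hs r (ψ 0 r)) : ℂ) * (innerSL ℂ u) (ψ 0 r) := by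
      funext r
      simp only [innerSL_apply_apply, heig 0 r, inner_smul_right, hone r]
      ring
    rw [funeq] at h2
    have huniq := h2.unique hprod
    have hg0 : (inner ℂ u (ψ 0 s) : ℂ) = 0 := (hON s).2 hi
    have hes : (inner ℂ (ψ 0 s) (Hs s (ψ 0 s)) : ℂ) = ((En 0 s : ℝ) : ℂ) := by
      rw [heig 0 s, inner_smul_right, hone s, mul_one]
    have hsym0 := (hherm s).isSymmetric u (ψd s)
    simp only [ContinuousLinearMap.coe_coe] at hsym0
    have hsym : (inner ℂ (Hs s u) (ψd s) : ℂ) = ((En i s : ℝ) : ℂ) * inner ℂ u (ψd s) := by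
      rw [hu, heig i s, inner_smul_left, Complex.conj_ofReal]
    simp only [innerSL_apply_apply, inner_add_right, hg0, hes, mul_zero, zero_add, ← hsym0, hsym]
      at huniq
    have hne : (((En 0 s : ℝ) : ℂ) - ((En i s : ℝ) : ℂ)) ≠ 0 := by
      have := hgap i s hi
      intro hcon
      have : (En 0 s : ℝ) = En i s := by exact_mod_cast sub_eq_zero.mp hcon
      linarith
    field_simp
    linear_combination -huniq
  -- ### Step 2: spectral action of the exponentials
  have heigc : ∀ (c : ℂ) (i : Fin (n + 1)),
      NormedSpace.exp (c • Hs s) (ψ i s) = Complex.exp (c * En i s) • ψ i s := by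
    intro c i
    refine exp_eig _ _ _ ?_
    rw [ContinuousLinearMap.smul_apply, heig i s, smul_smul]
  have hexp_apply : ∀ (c : ℂ) (u : V), NormedSpace.exp (c • Hs s) u
      = ∑ i, (Complex.exp (c * En i s) * inner ℂ (ψ i s) u) • ψ i s := by
    intro c u
    conv_lhs => rw [hcomplete s u]
    rw [map_sum]
    refine Finset.sum_congr rfl fun i _ => ?_
    rw [_root_.map_smul, heigc, smul_smul, mul_comm]
  -- unit modulus of the phases
  have habs : ∀ (r Ei : ℝ),
      (starRingEnd ℂ) (Complex.exp (Complex.I * r * Ei)) * Complex.exp (Complex.I * r * Ei)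
        = 1 := by
    intro r Ei
    rw [← Complex.exp_conj, ← Complex.exp_add]
    have : (starRingEnd ℂ) (Complex.I * r * Ei) + Complex.I * r * Ei = 0 := by
      simp [map_mul, Complex.conj_I, Complex.conj_ofReal]
    rw [this, Complex.exp_zero]
  -- ### Step 3: exp((I r) • H) is an isometry
  have hnorm : ∀ (r : ℝ) (u : V),
      ‖NormedSpace.exp ((Complex.I * r) • Hs s) u‖ = ‖u‖ := by
    intro r u
    have hww : (inner ℂ (NormedSpace.exp ((Complex.I * r) • Hs s) u)
        (NormedSpace.exp ((Complex.I * r) • Hs s) u) : ℂ) = inner ℂ u u := by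
      rw [hexp_apply]
      rw [Orthonormal.inner_sum (hON s)]
      conv_rhs => rw [hcomplete s u, Orthonormal.inner_sum (hON s)]
      refine Finset.sum_congr rfl fun i _ => ?_
      rw [map_mul]
      have h := habs r (En i s)
      linear_combination ((starRingEnd ℂ) (inner ℂ (ψ i s) u) * (inner ℂ (ψ i s) u : ℂ)) * h
    rw [@norm_eq_sqrt_re_inner ℂ, @norm_eq_sqrt_re_inner ℂ _ _ _ _ u, hww]
  have hopnorm : ∀ r : ℝ, ‖NormedSpace.exp ((Complex.I * (r : ℂ)) • Hs s)‖ ≤ 1 := by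
    intro r
    refine ContinuousLinearMap.opNorm_le_bound _ zero_le_one fun u => ?_
    rw [hnorm, one_mul]
  set Op : ℝ → (V →L[ℂ] V) := fun t =>
    NormedSpace.exp ((Complex.I * (t : ℂ)) • Hs s) ∘L Hder s ∘L
      NormedSpace.exp ((-(Complex.I * (t : ℂ))) • Hs s) with hOp
  have hneg : ∀ t : ℝ, (-(Complex.I * (t : ℂ))) = Complex.I * ((-t : ℝ) : ℂ) := by
    intro t; push_cast; ring
  have hOpbound : ∀ t : ℝ, ‖Op t‖ ≤ ‖Hder s‖ := by
    intro t
    refine le_trans (ContinuousLinearMap.opNorm_comp_le _ _) ?_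
    have h2 : ‖Hder s ∘L NormedSpace.exp ((-(Complex.I * (t : ℂ))) • Hs s)‖ ≤ ‖Hder s‖ := by
      refine le_trans (ContinuousLinearMap.opNorm_comp_le _ _) ?_
      have := hopnorm (-t)
      rw [← hneg t] at this
      nlinarith [norm_nonneg (Hder s)]
    have h1 := hopnorm t
    nlinarith [norm_nonneg (Hder s ∘L NormedSpace.exp ((-(Complex.I * (t : ℂ))) • Hs s)),
      ContinuousLinearMap.opNorm_nonneg
        (NormedSpace.exp ((Complex.I * (t : ℂ)) • Hs s))]
  have hFc : Integrable fun t => F (ΔE * t) := hFint.comp_mul_left' hΔE.ne'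
  have hcont : Continuous Op := by
    have hm : Continuous fun t : ℝ => Complex.I * (t : ℂ) :=
      continuous_const.mul Complex.continuous_ofReal
    have hc1 : Continuous fun t : ℝ => NormedSpace.exp ((Complex.I * (t : ℂ)) • Hs s) :=
      (continuous_iff_continuousAt.2 fun x =>
        (NormedSpace.exp_analytic (𝕂 := ℂ) x).continuousAt).comp (hm.smul continuous_const)
    have hc2 : Continuous fun t : ℝ => NormedSpace.exp ((-(Complex.I * (t : ℂ))) • Hs s) :=
      (continuous_iff_continuousAt.2 fun x =>
        (NormedSpace.exp_analytic (𝕂 := ℂ) x).continuousAt).comp ((hm.neg).smul continuous_const)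
    exact hc1.clm_comp (continuous_const.clm_comp hc2)
  have hOpInt : Integrable fun t => F (ΔE * t) • Op t := by
    refine Integrable.mono' (hFc.norm.mul_const ‖Hder s‖)
      (hFc.aestronglyMeasurable.smul hcont.aestronglyMeasurable) ?_
    filter_upwards with t
    exact (norm_smul_le _ _).trans (mul_le_mul_of_nonneg_left (hOpbound t) (norm_nonneg _))
  -- ### Step 4: reduce the RHS to a vector-valued integral
  have hRHS : Complex.I • (qaOp F ΔE (Hs s) (Hder s)) (ψ 0 s)
      = ∫ t, (F (ΔE * t) • Op t) (ψ 0 s) := by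
    have hop : Complex.I • (qaOp F ΔE (Hs s) (Hder s))
        = ∫ t, F (ΔE * t) • Op t := by
      rw [qaOp, smul_smul]
      norm_num [hOp, neg_smul]
    calc Complex.I • (qaOp F ΔE (Hs s) (Hder s)) (ψ 0 s)
        = (Complex.I • qaOp F ΔE (Hs s) (Hder s)) (ψ 0 s) := rfl
      _ = (∫ t, F (ΔE * t) • Op t) (ψ 0 s) := by rw [hop]
      _ = ∫ t, (F (ΔE * t) • Op t) (ψ 0 s) := ContinuousLinearMap.integral_apply hOpInt _
  -- pointwise expansion of the integrand
  set a : Fin (n + 1) → ℝ → ℂ := fun i t => F (ΔE * t)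
    * Complex.exp (Complex.I * ((En i s - En 0 s : ℝ) : ℂ) * t)
    * inner ℂ (ψ i s) (Hder s (ψ 0 s)) with ha
  have hpoint : ∀ t, (F (ΔE * t) • Op t) (ψ 0 s) = ∑ i, a i t • ψ i s := by
    intro t
    rw [ContinuousLinearMap.smul_apply, hOp]
    simp only [ContinuousLinearMap.comp_apply]
    rw [heigc (-(Complex.I * (t : ℂ))) 0, _root_.map_smul, _root_.map_smul,
      hexp_apply (Complex.I * (t : ℂ))]
    rw [Finset.smul_sum, Finset.smul_sum]
    refine Finset.sum_congr rfl fun i _ => ?_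
    rw [smul_smul, smul_smul]
    simp only [ha]
    have hcomb : Complex.exp (-(Complex.I * (t : ℂ)) * ((En 0 s : ℝ) : ℂ)) *
        Complex.exp (Complex.I * (t : ℂ) * ((En i s : ℝ) : ℂ))
        = Complex.exp (Complex.I * ((En i s - En 0 s : ℝ) : ℂ) * (t : ℂ)) := by
      rw [← Complex.exp_add]
      congr 1
      push_cast
      ring
    congr 1
    linear_combination (F (ΔE * t) * (inner ℂ (ψ i s) (Hder s (ψ 0 s)) : ℂ)) * hcomb
  -- integrability of each scalar coefficient
  have hexpnorm : ∀ (ν t : ℝ), ‖Complex.exp (Complex.I * (ν : ℂ) * (t : ℂ))‖ = 1 := by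
    intro ν t
    rw [Complex.norm_exp]
    simp [Complex.mul_re, Complex.mul_im]
  have hsc : ∀ i, Integrable (a i) := by
    intro i
    refine Integrable.mono'
      (hFc.norm.mul_const ‖(inner ℂ (ψ i s) (Hder s (ψ 0 s)) : ℂ)‖)
      (((hFc.aestronglyMeasurable.mul
        ((Complex.continuous_exp.comp
          ((continuous_const.mul Complex.continuous_ofReal))).aestronglyMeasurable)).mul_const
          _)) ?_
    filter_upwards with t
    rw [ha]
    simp only [norm_mul]
    rw [hexpnorm]
    simp
  -- the scalar integrals
  have hI0 : (∫ t : ℝ, F (ΔE * t)) = 0 := by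
    have hFzero : (∫ t : ℝ, F t) = 0 := by
      have h1 : (∫ t : ℝ, F (-1 * t)) = |((-1 : ℝ))⁻¹| • ∫ t : ℝ, F t :=
        Measure.integral_comp_mul_left F (-1)
      simp only [neg_one_mul, hFodd, integral_neg] at h1
      simp only [inv_neg, inv_one, abs_neg, abs_one, one_smul] at h1
      exact CharZero.neg_eq_self_iff.mp h1
    rw [Measure.integral_comp_mul_left F ΔE, hFzero, smul_zero]
  have hIν : ∀ ν : ℝ, ΔE ≤ ν →
      (∫ t : ℝ, F (ΔE * t) * Complex.exp (Complex.I * (ν : ℂ) * (t : ℂ)))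
        = -1 / (ν : ℂ) := by
    intro ν hν
    have hν0 : (0 : ℝ) < ν := lt_of_lt_of_le hΔE hν
    have hΔE' : (ΔE : ℂ) ≠ 0 := Complex.ofReal_ne_zero.mpr hΔE.ne'
    have hg : ∀ t : ℝ, F (ΔE * t)
          * Complex.exp (Complex.I * ((ν / ΔE : ℝ) : ℂ) * ((ΔE * t : ℝ) : ℂ))
        = F (ΔE * t) * Complex.exp (Complex.I * (ν : ℂ) * (t : ℂ)) := by
      intro t
      congr 2
      push_cast
      field_simp
    have hkey := Measure.integral_comp_mul_left
      (fun u : ℝ => F u * Complex.exp (Complex.I * ((ν / ΔE : ℝ) : ℂ) * (u : ℂ))) ΔE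
    simp only [hg] at hkey
    rw [hkey,
      hFhat (ν / ΔE) (by rw [abs_of_pos (by positivity)]; exact (one_le_div hΔE).mpr hν)]
    rw [abs_of_pos (inv_pos.2 hΔE), Complex.real_smul]
    have hΔE' : (ΔE : ℂ) ≠ 0 := Complex.ofReal_ne_zero.mpr hΔE.ne'
    have hν' : (ν : ℂ) ≠ 0 := Complex.ofReal_ne_zero.mpr hν0.ne'
    push_cast
    field_simp
  -- evaluate the coefficients
  have hint : ∀ i, (∫ t, a i t) = (inner ℂ (ψ i s) (ψd s) : ℂ) := by
    intro i
    by_cases hi : i = 0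
    · subst hi
      rw [hphase s]
      simp only [ha, sub_self, Complex.ofReal_zero, mul_zero, zero_mul, Complex.exp_zero,
        mul_one]
      rw [integral_mul_const, hI0, zero_mul]
    · have hν : ΔE ≤ En i s - En 0 s := by
        have := hgap i s hi
        linarith
      rw [hcoef i hi]
      simp only [ha]
      rw [integral_mul_const, hIν _ hν]
      have hne : (((En 0 s : ℝ) : ℂ) - ((En i s : ℝ) : ℂ)) ≠ 0 := by
        intro hcon
        have : (En 0 s : ℝ) = En i s := by exact_mod_cast sub_eq_zero.mp hcon
        linarith [hgap i s hi]
      have hne2 : ((En i s - En 0 s : ℝ) : ℂ) ≠ 0 := by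
        intro hcon
        have : (En i s - En 0 s : ℝ) = 0 := by exact_mod_cast hcon
        have : (En 0 s : ℝ) = En i s := by linarith
        linarith [hgap i s hi]
      push_cast at hne hne2 ⊢
      field_simp
      ring
  -- ### Step 5: put everything together
  rw [hRHS]
  have hsum : (∫ t, (F (ΔE * t) • Op t) (ψ 0 s)) = ∑ i, (∫ t, a i t) • ψ i s := by
    calc (∫ t, (F (ΔE * t) • Op t) (ψ 0 s)) = ∫ t, ∑ i, a i t • ψ i s := by
          simp_rw [hpoint]
      _ = ∑ i, ∫ t, a i t • ψ i s :=
          integral_finset_sum _ (fun i _ => (hsc i).smul_const (ψ i s))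
      _ = ∑ i, (∫ t, a i t) • ψ i s := by simp_rw [integral_smul_const]
  rw [hsum]
  conv_lhs => rw [hcomplete s (ψd s)]
  refine Finset.sum_congr rfl fun i _ => ?_
  rw [hint i]
end

section
/- Under the same assumptions, if P₀(s) = |ψ₀(s)⟩⟨ψ₀(s)| is the ground-state projector, then ∂_s P₀(s) = i[D_s, P₀(s)]. -/
open MeasureTheory

section aux
variable {V : Type*} [NormedAddCommGroup V] [InnerProductSpace ℂ V] [FiniteDimensional ℂ V]

lemma qa_exp_apply_eigen (A : V →L[ℂ] V) (c : ℂ) (x : V) (h : A x = c • x) :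
    NormedSpace.exp A x = NormedSpace.exp c • x := by
  have hpow : ∀ m : ℕ, (A ^ m) x = c ^ m • x := by
    intro m; induction m with
    | zero => simp
    | succ m ih =>
        rw [pow_succ, pow_succ, ContinuousLinearMap.mul_apply, h, _root_.map_smul, ih, smul_smul,
          mul_comm]
  have hs := (NormedSpace.exp_series_hasSum_exp' (𝕂 := ℂ) A).mapL
    (ContinuousLinearMap.apply ℂ V x)
  have hs' : HasSum (fun m : ℕ => ((m.factorial : ℂ)⁻¹ * c ^ m) • x)
      (NormedSpace.exp c • x) := by
    simpa [smul_eq_mul] using (NormedSpace.exp_series_hasSum_exp' (𝕂 := ℂ) c).smul_const x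
  refine HasSum.unique ?_ hs'
  convert hs using 2 with m
  simp [ContinuousLinearMap.apply_apply, hpow, smul_smul]
  rfl

omit [FiniteDimensional ℂ V] in
lemma qa_norm_sq_sum {n : ℕ} {ψ : Fin (n+1) → V} (hON : Orthonormal ℂ ψ)
    (w : V) (a : Fin (n+1) → ℂ) (hw : w = ∑ i, a i • ψ i) :
    ‖w‖ ^ 2 = ∑ i, ‖a i‖ ^ 2 := by
  have h : (inner ℂ w w : ℂ) = ((∑ i, ‖a i‖ ^ 2 : ℝ) : ℂ) := by
    rw [hw, hON.inner_sum]; push_cast; simp [RCLike.conj_mul]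
  have h2 := congrArg Complex.re h
  rw [← inner_self_eq_norm_sq (𝕜 := ℂ) w]
  simpa [← Complex.ofReal_pow] using h2

lemma qa_exp_norm_le {n : ℕ} (ψ : Fin (n+1) → V) (hON : Orthonormal ℂ ψ)
    (hcomp : ∀ v : V, v = ∑ i, (inner ℂ (ψ i) v : ℂ) • ψ i)
    (A : V →L[ℂ] V) (μ : Fin (n+1) → ℂ)
    (heig : ∀ i, A (ψ i) = μ i • ψ i) (hμ : ∀ i, ‖NormedSpace.exp (μ i)‖ ≤ 1) :
    ‖NormedSpace.exp A‖ ≤ 1 := by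
  refine ContinuousLinearMap.opNorm_le_bound _ zero_le_one fun v => ?_
  rw [one_mul]
  set c : Fin (n+1) → ℂ := fun i => inner ℂ (ψ i) v with hc
  have h1 : NormedSpace.exp A v = ∑ i, (c i * NormedSpace.exp (μ i)) • ψ i := by
    conv_lhs => rw [hcomp v, map_sum]
    refine Finset.sum_congr rfl fun i _ => ?_
    rw [_root_.map_smul, qa_exp_apply_eigen A (μ i) (ψ i) (heig i), smul_smul]
  have h2 := qa_norm_sq_sum hON _ _ h1
  have h3 := qa_norm_sq_sum hON v c (hcomp v)
  have hle : ‖NormedSpace.exp A v‖ ^ 2 ≤ ‖v‖ ^ 2 := by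
    rw [h2, h3]
    refine Finset.sum_le_sum fun i _ => ?_
    have : ‖c i * NormedSpace.exp (μ i)‖ ≤ ‖c i‖ := by
      rw [norm_mul]
      calc ‖c i‖ * ‖NormedSpace.exp (μ i)‖ ≤ ‖c i‖ * 1 :=
        mul_le_mul_of_nonneg_left (hμ i) (norm_nonneg _)
      _ = ‖c i‖ := mul_one _
    exact pow_le_pow_left₀ (norm_nonneg _) this 2
  exact (pow_le_pow_iff_left₀ (norm_nonneg _) (norm_nonneg _) two_ne_zero).mp hle

/-- rank one operator `|y⟩⟨x|` as a bilinear map. -/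
noncomputable def qaB (p : V × V) : V →L[ℂ] V := (innerSL ℂ p.1).smulRight p.2

omit [FiniteDimensional ℂ V] in
lemma qaB_apply (x y v : V) : qaB (x, y) v = (inner ℂ x v : ℂ) • y := rfl

omit [FiniteDimensional ℂ V] in
lemma qaB_bilin : IsBoundedBilinearMap ℝ (qaB (V := V)) where
  add_left x₁ x₂ y := by ext v; simp [qaB_apply, inner_add_left, add_smul]
  smul_left c x y := by
    ext v
    simp only [qaB_apply, ContinuousLinearMap.coe_smul', Pi.smul_apply]
    rw [show (c : ℝ) • x = ((c : ℝ) : ℂ) • x from (algebraMap_smul ℂ c x).symm,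
      inner_smul_left]
    simp only [Complex.conj_ofReal, smul_smul]
    rw [show ((c : ℝ) : ℂ) = algebraMap ℝ ℂ c from rfl, ← smul_smul, algebraMap_smul]
  add_right x y₁ y₂ := by ext v; simp [qaB_apply, smul_add]
  smul_right c x y := by
    ext v
    simp only [qaB_apply, ContinuousLinearMap.coe_smul', Pi.smul_apply]
    rw [smul_comm]
  bound := by
    refine ⟨1, one_pos, fun x y => ?_⟩
    rw [one_mul]
    calc ‖qaB (x, y)‖ = ‖innerSL ℂ x‖ * ‖y‖ := ContinuousLinearMap.norm_smulRight_apply _ _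
    _ ≤ ‖x‖ * ‖y‖ := by rw [innerSL_apply_norm]

end aux

/-- For the gapped family `H_s` with nondegenerate ground state `ψ 0 s`, the
ground-state projector `P₀(s) = |ψ₀(s)⟩⟨ψ₀(s)|` satisfies
`∂_s P₀(s) = i [D_s, P₀(s)]` where `D_s` is the exact quasi-adiabatic
continuation operator. -/
theorem quasi_adiabatic_projector {V : Type*} [NormedAddCommGroup V]
    [InnerProductSpace ℂ V] [FiniteDimensional ℂ V] (n : ℕ)
    (Hs Hder : ℝ → (V →L[ℂ] V)) (hH : ∀ s, HasDerivAt Hs (Hder s) s)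
    (hherm : ∀ s, IsSelfAdjoint (Hs s))
    (ψ : Fin (n + 1) → ℝ → V) (En : Fin (n + 1) → ℝ → ℝ)
    (hON : ∀ s, Orthonormal ℂ (fun i => ψ i s))
    (hcomplete : ∀ s (v : V), v = ∑ i, (inner ℂ (ψ i s) v : ℂ) • ψ i s)
    (heig : ∀ i s, Hs s (ψ i s) = ((En i s : ℝ) : ℂ) • ψ i s)
    (ΔE : ℝ) (hΔE : 0 < ΔE)
    (hgap : ∀ i s, i ≠ 0 → En 0 s + ΔE ≤ En i s)
    (F : ℝ → ℂ) (hFint : Integrable F) (hFodd : ∀ t, F (-t) = -F t)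
    (hFhat : ∀ ω : ℝ, 1 ≤ |ω| →
      ∫ t : ℝ, F t * Complex.exp (Complex.I * ω * t) = -1 / (ω : ℂ))
    (ψd : ℝ → V) (hψd : ∀ s, HasDerivAt (fun r => ψ 0 r) (ψd s) s)
    (P : ℝ → (V →L[ℂ] V))
    (hP : ∀ s (v : V), P s v = (inner ℂ (ψ 0 s) v : ℂ) • ψ 0 s) (s : ℝ) :
    HasDerivAt P (Complex.I •
      (qaOp F ΔE (Hs s) (Hder s) ∘L P s - P s ∘L qaOp F ΔE (Hs s) (Hder s))) s := by
  classical
  set D := qaOp F ΔE (Hs s) (Hder s) with hDdef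
  set a : Fin (n+1) → Fin (n+1) → ℂ := fun i j => inner ℂ (ψ i s) (Hder s (ψ j s)) with ha
  set c : Fin (n+1) → ℂ := fun i => inner ℂ (ψ i s) (ψd s) with hc
  have hij : ∀ r, ∀ i j : Fin (n+1), (inner ℂ (ψ i r) (ψ j r) : ℂ) = if i = j then 1 else 0 :=
    fun r i j => orthonormal_iff_ite.mp (hON r) i j
  have hclm : ∀ {u : ℝ → V →L[ℂ] V} {u' : V →L[ℂ] V} {v : ℝ → V} {v' : V},
      HasDerivAt u u' s → HasDerivAt v v' s →
      HasDerivAt (fun r => u r (v r)) (u' (v s) + u s v') s := by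
    intro u u' v v' hu hv
    have hb := ((isBoundedBilinearMap_apply (𝕜 := ℂ) (E := V) (F := V)).hasFDerivAt
      (u s, v s)).restrictScalars ℝ
    have hcomp := hb.comp_hasDerivAt s (hu.prodMk hv)
    convert hcomp using 1
    · rfl
    rw [ContinuousLinearMap.coe_restrictScalars',
      IsBoundedBilinearMap.deriv_apply]
    simp [add_comm]
  -- the scalar integrals
  set J : ℝ → ℂ := fun Δ => ∫ t : ℝ, F (ΔE * t) * Complex.exp (Complex.I * Δ * t) with hJdef
  have hFc : Integrable fun t : ℝ => F (ΔE * t) := hFint.comp_mul_left' hΔE.ne'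
  have hexpabs : ∀ (Δ : ℝ) (t : ℝ), ‖Complex.exp (Complex.I * Δ * t)‖ = 1 := by
    intro Δ t
    rw [Complex.norm_exp]
    simp [Complex.mul_re]
  have hJint : ∀ Δ : ℝ, Integrable fun t : ℝ => F (ΔE * t) * Complex.exp (Complex.I * Δ * t) := by
    intro Δ
    refine hFc.norm.mono' (hFc.aestronglyMeasurable.mul ?_) ?_
    · exact (Complex.continuous_exp.comp (by fun_prop)).aestronglyMeasurable
    · filter_upwards with t
      rw [norm_mul, hexpabs Δ t, mul_one]
  have hJ0 : J 0 = 0 := by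
    have h1 : J 0 = ∫ t : ℝ, F (ΔE * t) := by
      rw [hJdef]; simp
    have h2 : (∫ t : ℝ, F (ΔE * t)) = - ∫ t : ℝ, F (ΔE * t) := by
      conv_lhs => rw [← integral_neg_eq_self (fun t : ℝ => F (ΔE * t)) volume]
      rw [← integral_neg]
      congr 1 with t
      rw [show ΔE * -t = -(ΔE * t) by ring, hFodd]
    rw [h1]
    linear_combination h2 / 2
  have hJgap : ∀ Δ : ℝ, ΔE ≤ |Δ| → J Δ = -1 / (Δ : ℂ) := by
    intro Δ hΔ
    have hΔ0 : Δ ≠ 0 := by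
      intro h; rw [h, abs_zero] at hΔ; linarith
    set ω := Δ / ΔE with hω
    have hω1 : 1 ≤ |ω| := by
      rw [hω, abs_div, abs_of_pos hΔE, le_div_iff₀ hΔE, one_mul]
      exact hΔ
    have hcomp : (fun t : ℝ => F (ΔE * t) * Complex.exp (Complex.I * Δ * t))
        = fun t : ℝ => (fun u : ℝ => F u * Complex.exp (Complex.I * ω * u)) (ΔE * t) := by
      funext t
      simp only
      congr 2
      have hΔEc : (ΔE : ℂ) ≠ 0 := by exact_mod_cast hΔE.ne'
      rw [hω]
      push_cast
      field_simp
    rw [hJdef]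
    simp only
    rw [hcomp, MeasureTheory.Measure.integral_comp_mul_left
        (fun u : ℝ => F u * Complex.exp (Complex.I * ω * u)) ΔE, hFhat ω hω1,
      abs_of_pos (inv_pos.mpr hΔE), Complex.real_smul]
    have hΔEc : (ΔE : ℂ) ≠ 0 := by exact_mod_cast hΔE.ne'
    have hΔc : (Δ : ℂ) ≠ 0 := by exact_mod_cast hΔ0
    rw [hω]
    push_cast
    field_simp
  -- symmetry of `Hder s`
  have hsymd : ∀ x y : V, (inner ℂ (Hder s x) y : ℂ) = inner ℂ x (Hder s y) := by
    intro x y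
    have h1 : HasDerivAt (fun r => Hs r x) (Hder s x) s := by
      simpa using hclm (hH s) (hasDerivAt_const s x)
    have h2 : HasDerivAt (fun r => Hs r y) (Hder s y) s := by
      simpa using hclm (hH s) (hasDerivAt_const s y)
    have hfx : HasDerivAt (fun r => (inner ℂ (Hs r x) y : ℂ)) (inner ℂ (Hder s x) y) s := by
      simpa using h1.inner (𝕜 := ℂ) (hasDerivAt_const s y)
    have hfy : HasDerivAt (fun r => (inner ℂ x (Hs r y) : ℂ)) (inner ℂ x (Hder s y)) s := by
      simpa using (hasDerivAt_const s x).inner (𝕜 := ℂ) h2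
    have heqf : (fun r => (inner ℂ (Hs r x) y : ℂ)) = fun r => (inner ℂ x (Hs r y) : ℂ) :=
      funext fun r => by simpa using (hherm r).isSymmetric x y
    rw [heqf] at hfx
    exact hfx.unique hfy
  -- first-order perturbation theory
  have hrel : ∀ i : Fin (n+1), i ≠ 0 → a i 0 = ((En 0 s - En i s : ℝ) : ℂ) * c i := by
    have hHψd : HasDerivAt (fun r => Hs r (ψ 0 r)) (Hder s (ψ 0 s) + Hs s (ψd s)) s :=
      hclm (hH s) (hψd s)
    set e : ℝ → ℂ := fun r => inner ℂ (ψ 0 r) (Hs r (ψ 0 r)) with he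
    have hefun : ∀ r, e r = ((En 0 r : ℝ) : ℂ) := by
      intro r
      rw [he]
      simp only
      rw [heig, inner_smul_right]
      rw [hij r 0 0]; simp
    have heD : HasDerivAt e ((inner ℂ (ψ 0 s) (Hder s (ψ 0 s) + Hs s (ψd s)) : ℂ)
        + inner ℂ (ψd s) (Hs s (ψ 0 s))) s := (hψd s).inner (𝕜 := ℂ) hHψd
    set ed : ℂ := (inner ℂ (ψ 0 s) (Hder s (ψ 0 s) + Hs s (ψd s)) : ℂ)
        + inner ℂ (ψd s) (Hs s (ψ 0 s)) with hed
    have hsm : HasDerivAt (fun r => e r • ψ 0 r) (e s • ψd s + ed • ψ 0 s) s :=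
      heD.smul (hψd s)
    have hfeq : (fun r => Hs r (ψ 0 r)) = fun r => e r • ψ 0 r :=
      funext fun r => by rw [hefun r, heig 0 r]
    rw [hfeq] at hHψd
    have huniq : Hder s (ψ 0 s) + Hs s (ψd s) = e s • ψd s + ed • ψ 0 s :=
      hHψd.unique hsm
    intro i hi
    have hcg := congrArg (fun v => (inner ℂ (ψ i s) v : ℂ)) huniq
    simp only [inner_add_right, inner_smul_right] at hcg
    have h1 : (inner ℂ (ψ i s) (Hs s (ψd s)) : ℂ) = ((En i s : ℝ) : ℂ) * c i := by
      have hsymm := (hherm s).isSymmetric (ψ i s) (ψd s)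
      simp only [ContinuousLinearMap.coe_coe] at hsymm
      rw [← hsymm, heig, inner_smul_left, Complex.conj_ofReal, hc]
    have h2 : (inner ℂ (ψ i s) (ψ 0 s) : ℂ) = 0 := by
      rw [hij s i 0, if_neg hi]
    rw [h1, h2, hefun s, mul_zero, add_zero] at hcg
    rw [ha]
    simp only
    push_cast
    push_cast at hcg
    linear_combination hcg
  have hc0 : (starRingEnd ℂ) (c 0) + c 0 = 0 := by
    have hn : HasDerivAt (fun r => (inner ℂ (ψ 0 r) (ψ 0 r) : ℂ))
        ((inner ℂ (ψ 0 s) (ψd s) : ℂ) + inner ℂ (ψd s) (ψ 0 s)) s :=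
      (hψd s).inner (𝕜 := ℂ) (hψd s)
    have hone : (fun r => (inner ℂ (ψ 0 r) (ψ 0 r) : ℂ)) = fun _ => 1 :=
      funext fun r => by rw [hij r 0 0]; simp
    rw [hone] at hn
    have h0 := hn.unique (hasDerivAt_const s 1)
    rw [hc]
    simp only
    rw [inner_conj_symm (ψd s) (ψ 0 s)]
    linear_combination h0
  -- action of D on the eigenbasis
  have hexp : ∀ (z : ℂ) (i : Fin (n+1)),
      NormedSpace.exp (z • Hs s) (ψ i s) = Complex.exp (z * ((En i s : ℝ) : ℂ)) • ψ i s := by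
    intro z i
    rw [Complex.exp_eq_exp_ℂ]
    refine qa_exp_apply_eigen _ _ _ ?_
    rw [ContinuousLinearMap.smul_apply, heig, smul_smul]
  have hexpv : ∀ (z : ℂ) (v : V), NormedSpace.exp (z • Hs s) v
      = ∑ i, (Complex.exp (z * ((En i s : ℝ) : ℂ)) * inner ℂ (ψ i s) v) • ψ i s := by
    intro z v
    conv_lhs => rw [hcomplete s v, map_sum]
    refine Finset.sum_congr rfl fun i _ => ?_
    rw [_root_.map_smul, hexp, smul_smul, mul_comm]
  set K : ℝ → (V →L[ℂ] V) := fun t =>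
    NormedSpace.exp ((Complex.I * (t : ℂ)) • Hs s) ∘L Hder s ∘L
      NormedSpace.exp ((-(Complex.I * (t : ℂ))) • Hs s) with hK
  have hexpc : Continuous (NormedSpace.exp : (V →L[ℂ] V) → (V →L[ℂ] V)) := by
    have h := NormedSpace.continuousOn_exp (𝕂 := ℂ) (𝔸 := V →L[ℂ] V)
    rw [NormedSpace.expSeries_radius_eq_top, Metric.eball_top_eq_univ, continuousOn_univ] at h
    exact h
  have hKcont : Continuous K := by
    apply Continuous.clm_comp
    · exact hexpc.comp (by fun_prop)
    apply Continuous.clm_comp continuous_const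
    exact hexpc.comp (by fun_prop)
  have hbexp : ∀ z : ℂ, z.re = 0 → ‖NormedSpace.exp (z • Hs s)‖ ≤ 1 := by
    intro z hz
    refine qa_exp_norm_le (fun i => ψ i s) (hON s) (hcomplete s) _
      (fun i => z * ((En i s : ℝ) : ℂ)) (fun i => by
        rw [ContinuousLinearMap.smul_apply, heig, smul_smul]) (fun i => ?_)
    rw [← Complex.exp_eq_exp_ℂ, Complex.norm_exp]
    simp [Complex.mul_re, hz]
  have hKnorm : ∀ t : ℝ, ‖K t‖ ≤ ‖Hder s‖ := by
    intro t
    have h1 := hbexp (Complex.I * t) (by simp)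
    have h2 := hbexp (-(Complex.I * t)) (by simp)
    refine le_trans (ContinuousLinearMap.opNorm_comp_le _ _) ?_
    have h3 := ContinuousLinearMap.opNorm_comp_le (Hder s)
      (NormedSpace.exp ((-(Complex.I * (t : ℂ))) • Hs s))
    have h4 : ‖Hder s ∘L NormedSpace.exp ((-(Complex.I * (t : ℂ))) • Hs s)‖ ≤ ‖Hder s‖ := by
      refine le_trans h3 ?_
      nlinarith [norm_nonneg (Hder s)]
    calc ‖NormedSpace.exp ((Complex.I * (t : ℂ)) • Hs s)‖ *
        ‖Hder s ∘L NormedSpace.exp ((-(Complex.I * (t : ℂ))) • Hs s)‖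
        ≤ 1 * ‖Hder s‖ := mul_le_mul h1 h4 (norm_nonneg _) zero_le_one
    _ = ‖Hder s‖ := one_mul _
  have hGint : Integrable (fun t : ℝ => F (ΔE * t) • K t) := by
    refine (hFc.norm.mul_const ‖Hder s‖).mono'
      (hFc.aestronglyMeasurable.smul hKcont.aestronglyMeasurable) ?_
    filter_upwards with t
    rw [norm_smul (F (ΔE * t)) (K t)]
    exact mul_le_mul_of_nonneg_left (hKnorm t) (norm_nonneg _)
  have hDψ : ∀ j, D (ψ j s) =
      ∑ i, ((-Complex.I) * (J (En i s - En j s) * a i j)) • ψ i s := by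
    intro j
    have happ : D (ψ j s) = (-Complex.I) • ((∫ t : ℝ, F (ΔE * t) • K t) (ψ j s)) := by
      rw [hDdef]
      unfold qaOp
      rw [ContinuousLinearMap.smul_apply, hK]
    rw [happ, ContinuousLinearMap.integral_apply hGint (ψ j s)]
    have hint2 : (fun t => (F (ΔE * t) • K t) (ψ j s))
        = fun t : ℝ => ∑ i, ((F (ΔE * t) *
            Complex.exp (Complex.I * ((En i s - En j s : ℝ) : ℂ) * t)) * a i j) • ψ i s := by
      funext t
      rw [ContinuousLinearMap.smul_apply, hK]
      simp only
      rw [ContinuousLinearMap.comp_apply, ContinuousLinearMap.comp_apply, hexp, _root_.map_smul,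
        _root_.map_smul, hexpv, Finset.smul_sum, Finset.smul_sum]
      refine Finset.sum_congr rfl fun i _ => ?_
      simp only [smul_smul]
      congr 1
      rw [show Complex.I * ((En i s - En j s : ℝ) : ℂ) * t
          = Complex.I * t * ((En i s : ℝ) : ℂ) + (-(Complex.I * t)) * ((En j s : ℝ) : ℂ) by
        push_cast; ring, Complex.exp_add]
      ring
    rw [hint2, integral_finset_sum _ (fun i _ => ((hJint _).mul_const (a i j)).smul_const _),
      Finset.smul_sum]
    refine Finset.sum_congr rfl fun i _ => ?_
    rw [integral_smul_const, MeasureTheory.integral_mul_const, smul_smul]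
  -- derivative of the projector
  have hPd : HasDerivAt P (qaB (ψd s, ψ 0 s) + qaB (ψ 0 s, ψd s)) s := by
    have hPfun : P = fun r => qaB (ψ 0 r, ψ 0 r) := by
      funext r; ext v; rw [hP r v]; rfl
    have hprod : HasDerivAt (fun r => (ψ 0 r, ψ 0 r)) (ψd s, ψd s) s := (hψd s).prodMk (hψd s)
    have hb := (qaB_bilin (V := V)).hasFDerivAt (ψ 0 s, ψ 0 s)
    have hcompd := hb.comp_hasDerivAt s hprod
    rw [hPfun]
    refine hcompd.congr_deriv ?_
    rw [IsBoundedBilinearMap.deriv_apply]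
    exact add_comm _ _
  -- the commutator identity
  have hkey : Complex.I • (D ∘L P s - P s ∘L D) = qaB (ψd s, ψ 0 s) + qaB (ψ 0 s, ψd s) := by
    have hext : ∀ A B : V →L[ℂ] V, (∀ j, A (ψ j s) = B (ψ j s)) → A = B := by
      intro A B h
      ext v
      conv_lhs => rw [hcomplete s v]
      conv_rhs => rw [hcomplete s v]
      rw [map_sum, map_sum]
      exact Finset.sum_congr rfl fun j _ => by rw [_root_.map_smul, _root_.map_smul, h j]
    have hψdsum : ψd s = ∑ i, c i • ψ i s := by rw [hc]; exact hcomplete s (ψd s)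
    refine hext _ _ fun j => ?_
    rw [ContinuousLinearMap.smul_apply, ContinuousLinearMap.sub_apply,
      ContinuousLinearMap.comp_apply, ContinuousLinearMap.comp_apply,
      ContinuousLinearMap.add_apply, qaB_apply, qaB_apply]
    by_cases hj : j = 0
    · subst hj
      have hP0 : P s (ψ 0 s) = ψ 0 s := by rw [hP, hij s 0 0]; simp
      have hPD : P s (∑ i, ((-Complex.I) * (J (En i s - En 0 s) * a i 0)) • ψ i s) = 0 := by
        rw [hP, (hON s).inner_right_fintype
          (fun i => (-Complex.I) * (J (En i s - En 0 s) * a i 0)) 0]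
        rw [sub_self, hJ0]
        simp
      rw [hP0, hDψ 0, hPD, sub_zero, Finset.smul_sum]
      have hRHS : (inner ℂ (ψd s) (ψ 0 s) : ℂ) • ψ 0 s + (inner ℂ (ψ 0 s) (ψ 0 s) : ℂ) • ψd s
          = ∑ i, ((if i = 0 then (starRingEnd ℂ) (c 0) else 0) + c i) • ψ i s := by
        rw [hij s 0 0, if_pos rfl, one_smul, ← inner_conj_symm (ψd s) (ψ 0 s)]
        have hcc : (inner ℂ (ψ 0 s) (ψd s) : ℂ) = c 0 := rfl
        rw [hcc]
        conv_lhs => rw [hψdsum]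
        simp only [add_smul, Finset.sum_add_distrib]
        congr 1
        simp [ite_smul]
      rw [hRHS]
      refine Finset.sum_congr rfl fun i _ => ?_
      rw [smul_smul]
      by_cases hi : i = 0
      · subst hi
        rw [sub_self, hJ0, if_pos rfl, hc0]
        simp
      · rw [if_neg hi, zero_add, hrel i hi]
        have hgapi := hgap i s hi
        have hpos : (0 : ℝ) < En i s - En 0 s := by linarith
        rw [hJgap _ (by rw [abs_of_pos hpos]; linarith)]
        have hne : ((En i s - En 0 s : ℝ) : ℂ) ≠ 0 := by
          exact_mod_cast hpos.ne'
        push_cast at hne ⊢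
        congr 1
        field_simp
        linear_combination ((↑(En 0 s) - ↑(En i s) : ℂ) * c i) * Complex.I_sq
    · have hPj : P s (ψ j s) = 0 := by
        rw [hP, hij s 0 j, if_neg (fun h => hj h.symm)]
        simp
      have hPDj : P s (∑ i, ((-Complex.I) * (J (En i s - En j s) * a i j)) • ψ i s)
          = ((-Complex.I) * (J (En 0 s - En j s) * a 0 j)) • ψ 0 s := by
        rw [hP, (hON s).inner_right_fintype
          (fun i => (-Complex.I) * (J (En i s - En j s) * a i j)) 0]
      rw [hPj, map_zero, hDψ j, hPDj, hij s 0 j, if_neg (fun h => hj h.symm), zero_smul,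
        add_zero, zero_sub, smul_neg, smul_smul]
      have ha0j : a 0 j = ((En 0 s - En j s : ℝ) : ℂ) * (starRingEnd ℂ) (c j) := by
        have hsj := hsymd (ψ 0 s) (ψ j s)
        rw [ha]
        simp only
        rw [← hsj, ← inner_conj_symm (Hder s (ψ 0 s)) (ψ j s)]
        rw [show (inner ℂ (ψ j s) (Hder s (ψ 0 s)) : ℂ) = a j 0 from rfl, hrel j hj]
        rw [map_mul, Complex.conj_ofReal]
      have hgapj := hgap j s hj
      have hnegj : En 0 s - En j s < 0 := by linarith
      rw [ha0j, hJgap _ (by rw [abs_of_neg hnegj]; linarith)]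
      have hdj : (inner ℂ (ψd s) (ψ j s) : ℂ) = (starRingEnd ℂ) (c j) :=
        (inner_conj_symm (ψd s) (ψ j s)).symm
      rw [hdj]
      have hne : ((En 0 s - En j s : ℝ) : ℂ) ≠ 0 := by
        exact_mod_cast hnegj.ne
      push_cast at hne ⊢
      rw [← neg_smul]
      congr 1
      field_simp
      linear_combination (-(starRingEnd ℂ) (c j)) * Complex.I_sq
  rw [hkey]
  exact hPd
end

section
/- Let T be a unitary (translation) with Tψ₀ = zψ₀ for |z| = 1, and let each q_j (j = 1..N) be a commuting family of Hermitian operators with integer spectra satisfying T q_j T^{-1} = q_{j−1} (indices mod N), Q = Σ_j q_j, and Qψ₀ = Nρ ψ₀. Define U := Π_j exp(2πi (j/N) q_j) and ψ_LSM := U ψ₀. Then T ψ_LSM = z e^{2πiρ} ψ_LSM. -/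
open MeasureTheory

section Aux

variable {V : Type*} [NormedAddCommGroup V] [InnerProductSpace ℂ V] [FiniteDimensional ℂ V]

private lemma exp_apply_eigenvec (A : V →L[ℂ] V) (v : V) (μ : ℂ) (h : A v = μ • v) :
    NormedSpace.exp A v = Complex.exp μ • v := by
  have hpow : ∀ n : ℕ, (A ^ n) v = μ ^ n • v := by
    intro n
    induction n with
    | zero => simp
    | succ n ih =>
      rw [pow_succ, ContinuousLinearMap.mul_apply, h, ContinuousLinearMap.map_smul, ih,
        smul_smul, ← pow_succ']
  have hs : Summable fun n : ℕ => ((n.factorial : ℂ))⁻¹ • A ^ n :=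
    NormedSpace.expSeries_summable' A
  have hexpA : NormedSpace.exp A = ∑' n : ℕ, ((n.factorial : ℂ))⁻¹ • A ^ n :=
    congrFun (NormedSpace.exp_eq_tsum ℂ) A
  rw [hexpA]
  have h1 : (∑' n : ℕ, ((n.factorial : ℂ))⁻¹ • A ^ n) v
      = ∑' n : ℕ, (((n.factorial : ℂ))⁻¹ • A ^ n) v :=
    (ContinuousLinearMap.apply ℂ V v).map_tsum hs
  rw [h1]
  have h2 : ∀ n : ℕ, (((n.factorial : ℂ))⁻¹ • A ^ n) v
      = (((n.factorial : ℂ))⁻¹ * μ ^ n) • v := by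
    intro n
    rw [ContinuousLinearMap.smul_apply, hpow, smul_smul]
  rw [tsum_congr h2]
  have hs2 : Summable fun n : ℕ => ((n.factorial : ℂ))⁻¹ * μ ^ n := by
    simpa [smul_eq_mul] using NormedSpace.expSeries_summable' (𝕂 := ℂ) (𝔸 := ℂ) μ
  rw [hs2.tsum_smul_const]
  congr 1
  have hexpμ : Complex.exp μ = ∑' n : ℕ, ((n.factorial : ℂ))⁻¹ • μ ^ n := by
    rw [Complex.exp_eq_exp_ℂ]
    exact congrFun (NormedSpace.exp_eq_tsum ℂ) μ
  rw [hexpμ]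
  exact tsum_congr fun n => by rw [smul_eq_mul]

private lemma exp_two_pi_I_smul_eq_one (A : V →L[ℂ] V) (hA : IsSelfAdjoint A)
    (hint : spectrum ℂ A ⊆ Set.range ((↑) : ℤ → ℂ)) :
    NormedSpace.exp ((2 * Real.pi * Complex.I : ℂ) • A) = 1 := by
  have hsym : (A : V →ₗ[ℂ] V).IsSymmetric := hA.isSymmetric
  have hdim : Module.finrank ℂ V = Module.finrank ℂ V := rfl
  set b := hsym.eigenvectorBasis hdim with hb
  have key : ∀ i, NormedSpace.exp ((2 * Real.pi * Complex.I : ℂ) • A) (b i) = b i := by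
    intro i
    set μc : ℂ := ((hsym.eigenvalues hdim i : ℝ) : ℂ) with hμ
    have hei : A (b i) = μc • b i := hsym.apply_eigenvectorBasis hdim i
    have hmem : μc ∈ spectrum ℂ A := by
      rw [spectrum.mem_iff]
      intro hu
      have hv0 : (algebraMap ℂ (V →L[ℂ] V) μc - A) (b i) = 0 := by
        simp [ContinuousLinearMap.sub_apply, Algebra.algebraMap_eq_smul_one, hei]
      have hbz : b i = 0 := by
        have h1 : (↑hu.unit : V →L[ℂ] V) (b i) = 0 := by rw [hu.unit_spec]; exact hv0
        have h2 : (↑hu.unit⁻¹ : V →L[ℂ] V) ((↑hu.unit : V →L[ℂ] V) (b i)) = b i := by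
          rw [← ContinuousLinearMap.mul_apply, Units.inv_mul, ContinuousLinearMap.one_apply]
        rw [h1, _root_.map_zero] at h2
        exact h2.symm
      exact b.toBasis.ne_zero i (by simpa using hbz)
    obtain ⟨m, hm⟩ := hint hmem
    have happ : ((2 * Real.pi * Complex.I : ℂ) • A) (b i)
        = (2 * Real.pi * Complex.I * μc) • b i := by
      rw [ContinuousLinearMap.smul_apply, hei, smul_smul]
    rw [exp_apply_eigenvec _ _ _ happ, ← hm,
      show (2 * Real.pi * Complex.I * (m : ℂ)) = (m : ℂ) * (2 * Real.pi * Complex.I) by ring,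
      Complex.exp_int_mul_two_pi_mul_I, one_smul]
  apply ContinuousLinearMap.coe_injective
  apply b.toBasis.ext
  intro i
  simpa using key i

private lemma multiset_noncommProd_congr {M : Type*} [Monoid M] {m₁ m₂ : Multiset M}
    (h : m₁ = m₂) (c₁ : {x | x ∈ m₁}.Pairwise Commute) (c₂ : {x | x ∈ m₂}.Pairwise Commute) :
    m₁.noncommProd c₁ = m₂.noncommProd c₂ := by
  subst h; rfl

private lemma noncommProd_reindex {M : Type*} [Monoid M] {n : ℕ} (e : Equiv.Perm (Fin n))
    (f : Fin n → M) (comm) (comm') :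
    Finset.univ.noncommProd (fun k => f (e k)) comm' = Finset.univ.noncommProd f comm := by
  unfold Finset.noncommProd
  apply multiset_noncommProd_congr
  conv_rhs => rw [← Finset.map_univ_equiv e, Finset.map_val]
  rw [Multiset.map_map]
  rfl

private lemma fin_val_add_one {N : ℕ} [NeZero N] (k : Fin N) :
    ((k + 1 : Fin N) : ℕ) = if (k : ℕ) + 1 = N then 0 else (k : ℕ) + 1 := by
  obtain ⟨n, rfl⟩ := Nat.exists_eq_succ_of_ne_zero (NeZero.ne N)
  rw [Fin.val_add_one]
  by_cases hk : k = Fin.last n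
  · subst hk; simp
  · have hne : (k : ℕ) ≠ n := fun h => hk (Fin.ext (by simp [h, Fin.val_last]))
    rw [if_neg hk, if_neg (by omega)]

private noncomputable def lsmc (N : ℕ) (j : Fin N) : ℂ :=
  2 * Real.pi * Complex.I * ((j.val + 1 : ℕ) : ℂ) / N

end Aux

/-- Lieb–Schultz–Mattis twist: let `T` be unitary with `T ψ₀ = z ψ₀`, and let
`q j` (sites `j = 1, …, N` indexed by `Fin N` via `j ↦ j+1`) be pairwise commuting
Hermitian operators with integer spectra satisfying `T q_j T⁻¹ = q_{j-1}`
(cyclically), `Q = ∑ q_j` and `Q ψ₀ = N ρ ψ₀`.  Then the twisted state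
`ψ_LSM = (∏_j e^{2πi (j/N) q_j}) ψ₀` satisfies `T ψ_LSM = z e^{2πiρ} ψ_LSM`. -/
theorem lsm_twist_eigenvalue {V : Type*} [NormedAddCommGroup V]
    [InnerProductSpace ℂ V] [FiniteDimensional ℂ V] (N : ℕ) [NeZero N]
    (T Tinv : V →L[ℂ] V) (hT1 : T ∘L Tinv = 1) (hT2 : Tinv ∘L T = 1)
    (q : Fin N → (V →L[ℂ] V))
    (hqherm : ∀ j, IsSelfAdjoint (q j))
    (hqint : ∀ j, spectrum ℂ (q j) ⊆ Set.range ((↑) : ℤ → ℂ))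
    (hqcomm : ∀ j k, Commute (q j) (q k))
    (hTq : ∀ j : Fin N, T ∘L q j ∘L Tinv = q (j - 1))
    (ψ₀ : V) (z : ℂ) (hz : ‖z‖ = 1) (hTψ : T ψ₀ = z • ψ₀)
    (ρ : ℝ) (hQψ : (∑ j, q j) ψ₀ = ((N * ρ : ℝ) : ℂ) • ψ₀) :
    T ((Finset.univ.noncommProd
          (fun j : Fin N =>
            NormedSpace.exp ((2 * Real.pi * Complex.I * ((j.val + 1 : ℕ) : ℂ) / N) • q j))
          (fun j _ k _ _ =>
            (((hqcomm j k).smul_left _).smul_right _).exp)) ψ₀) =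
      (z * Complex.exp (2 * Real.pi * Complex.I * ρ)) •
        ((Finset.univ.noncommProd
          (fun j : Fin N =>
            NormedSpace.exp ((2 * Real.pi * Complex.I * ((j.val + 1 : ℕ) : ℂ) / N) • q j))
          (fun j _ k _ _ =>
            (((hqcomm j k).smul_left _).smul_right _).exp)) ψ₀) := by
  classical
  letI : NormedAlgebra ℚ (V →L[ℂ] V) := NormedAlgebra.restrictScalars ℚ ℂ (V →L[ℂ] V)
  set U : V →L[ℂ] V := Finset.univ.noncommProd
      (fun j : Fin N =>
        NormedSpace.exp ((2 * Real.pi * Complex.I * ((j.val + 1 : ℕ) : ℂ) / N) • q j))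
      (fun j _ k _ _ =>
        (((hqcomm j k).smul_left _).smul_right _).exp) with hU
  have hNC : (N : ℂ) ≠ 0 := Nat.cast_ne_zero.mpr (NeZero.ne N)
  have hT1' : T * Tinv = 1 := hT1
  have hT2' : Tinv * T = 1 := hT2
  have hTq' : ∀ j : Fin N, T * q j * Tinv = q (j - 1) := by
    intro j
    rw [mul_assoc]
    exact hTq j
  have hqsc : ∀ (a b : ℂ) (j k : Fin N), Commute (a • q j) (b • q k) :=
    fun a b j k => ((hqcomm j k).smul_right b).smul_left a
  have hexpc : ∀ (a b : ℂ) (j k : Fin N),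
      Commute (NormedSpace.exp (a • q j)) (NormedSpace.exp (b • q k)) :=
    fun a b j k => (hqsc a b j k).exp
  have hwrap : ∀ k : Fin N, NormedSpace.exp ((2 * Real.pi * Complex.I : ℂ) • q k) = 1 :=
    fun k => exp_two_pi_I_smul_eq_one (q k) (hqherm k) (hqint k)
  set d : ℂ := 2 * Real.pi * Complex.I / N with hd
  have hU' : U = Finset.univ.noncommProd (fun j => NormedSpace.exp (lsmc N j • q j))
      (fun j _ k _ _ => hexpc _ _ _ _) := by
    rw [hU]; rfl
  have hconj : ∀ j : Fin N, T * NormedSpace.exp (lsmc N j • q j) * Tinv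
      = NormedSpace.exp (lsmc N j • q (j - 1)) := by
    intro j
    have h1 : T * (lsmc N j • q j) * Tinv = lsmc N j • q (j - 1) := by
      rw [mul_smul_comm, smul_mul_assoc, hTq']
    rw [← h1]
    exact (NormedSpace.exp_units_conj ⟨T, Tinv, hT1', hT2'⟩ _).symm
  let φ : (V →L[ℂ] V) →* (V →L[ℂ] V) :=
    { toFun := fun x => T * x * Tinv
      map_one' := by simpa using hT1'
      map_mul' := fun x y => by
        simp only [mul_assoc]
        rw [← mul_assoc Tinv T, hT2', one_mul] }
  have h2 : T * U * Tinv
      = Finset.univ.noncommProd (fun j => NormedSpace.exp (lsmc N j • q (j - 1)))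
        (fun j _ k _ _ => hexpc _ _ _ _) := by
    have hφ : φ U = T * U * Tinv := rfl
    rw [← hφ, hU']
    refine (Finset.map_noncommProd _ _ _ φ).trans ?_
    exact Finset.noncommProd_congr rfl (fun j _ => hconj j) _
  have h3 : Finset.univ.noncommProd (fun j => NormedSpace.exp (lsmc N j • q (j - 1)))
        (fun j _ k _ _ => hexpc _ _ _ _)
      = Finset.univ.noncommProd (fun k => NormedSpace.exp (lsmc N (k + 1) • q k))
        (fun j _ k _ _ => hexpc _ _ _ _) := by
    have h3a := noncommProd_reindex (Equiv.addRight (1 : Fin N))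
      (fun j => NormedSpace.exp (lsmc N j • q (j - 1)))
      (fun j _ k _ _ => hexpc _ _ _ _) (fun j _ k _ _ => hexpc _ _ _ _)
    refine h3a.symm.trans ?_
    refine Finset.noncommProd_congr rfl (fun k _ => ?_) _
    simp [Equiv.coe_addRight, add_sub_cancel_right]
  have h4 : ∀ k : Fin N, NormedSpace.exp (lsmc N (k + 1) • q k)
      = NormedSpace.exp (lsmc N k • q k) * NormedSpace.exp (d • q k) := by
    intro k
    have hsplit : NormedSpace.exp ((lsmc N k + d) • q k)
        = NormedSpace.exp (lsmc N k • q k) * NormedSpace.exp (d • q k) := by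
      rw [add_smul]
      exact NormedSpace.exp_add_of_commute (hqsc _ _ k k)
    by_cases hk : (k : ℕ) + 1 = N
    · have hv : ((k + 1 : Fin N) : ℕ) = 0 := by rw [fin_val_add_one, if_pos hk]
      have hkc : (((k : ℕ) + 1 : ℕ) : ℂ) = (N : ℂ) := by exact_mod_cast hk
      have hl1 : lsmc N (k + 1) = d := by
        simp [lsmc, hv, hd]
      have hl2 : lsmc N k = 2 * Real.pi * Complex.I := by
        unfold lsmc
        rw [hkc]
        field_simp
      rw [hl1, hl2, hwrap k, one_mul]
    · have hv : ((k + 1 : Fin N) : ℕ) = (k : ℕ) + 1 := by rw [fin_val_add_one, if_neg hk]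
      have hl : lsmc N (k + 1) = lsmc N k + d := by
        unfold lsmc
        rw [hv, hd]
        push_cast
        field_simp
      rw [hl, hsplit]
  have h5 : Finset.univ.noncommProd (fun k => NormedSpace.exp (lsmc N (k + 1) • q k))
        (fun j _ k _ _ => hexpc _ _ _ _)
      = U * Finset.univ.noncommProd (fun k => NormedSpace.exp (d • q k))
          (fun j _ k _ _ => hexpc _ _ _ _) := by
    refine (Finset.noncommProd_congr rfl (fun k _ => h4 k)
      (fun j _ k _ _ => hexpc _ _ _ _)).trans ?_
    rw [hU']
    exact Finset.noncommProd_mul_distrib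
        (fun k => NormedSpace.exp (lsmc N k • q k))
        (fun k => NormedSpace.exp (d • q k))
        (fun j _ k _ _ => hexpc _ _ _ _) (fun j _ k _ _ => hexpc _ _ _ _)
        (fun j _ k _ _ => hexpc _ _ _ _)
  have h6 : Finset.univ.noncommProd (fun k => NormedSpace.exp (d • q k))
        (fun j _ k _ _ => hexpc _ _ _ _)
      = NormedSpace.exp (d • ∑ j, q j) := by
    rw [Finset.smul_sum]
    exact (NormedSpace.exp_sum_of_commute Finset.univ (fun k => d • q k)
      (fun i _ j _ _ => hqsc _ _ _ _)).symm
  have hconjU : T * U * Tinv = U * NormedSpace.exp (d • ∑ j, q j) := by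
    rw [h2, h3, h5, h6]
  have hTUop : T * U = U * NormedSpace.exp (d • ∑ j, q j) * T := by
    conv_lhs => rw [← mul_one (T * U), ← hT2', ← mul_assoc]
    rw [hconjU]
  have hexpψ : NormedSpace.exp (d • ∑ j, q j) ψ₀
      = Complex.exp (2 * Real.pi * Complex.I * ρ) • ψ₀ := by
    have he : (d • ∑ j, q j) ψ₀ = (d * ((N * ρ : ℝ) : ℂ)) • ψ₀ := by
      rw [ContinuousLinearMap.smul_apply, hQψ, smul_smul]
    rw [exp_apply_eigenvec _ _ _ he]
    congr 2
    rw [hd]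
    push_cast
    field_simp
  calc T (U ψ₀) = (T * U) ψ₀ := rfl
    _ = (U * NormedSpace.exp (d • ∑ j, q j) * T) ψ₀ := by rw [hTUop]
    _ = U (NormedSpace.exp (d • ∑ j, q j) (T ψ₀)) := rfl
    _ = U (NormedSpace.exp (d • ∑ j, q j) (z • ψ₀)) := by rw [hTψ]
    _ = z • U (NormedSpace.exp (d • ∑ j, q j) ψ₀) := by
        rw [ContinuousLinearMap.map_smul, ContinuousLinearMap.map_smul]
    _ = z • U (Complex.exp (2 * Real.pi * Complex.I * ρ) • ψ₀) := by rw [hexpψ]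
    _ = (z * Complex.exp (2 * Real.pi * Complex.I * ρ)) • U ψ₀ := by
        rw [ContinuousLinearMap.map_smul, smul_smul]
end

section
/- There is no unit vector ψ' orthogonal to the product state ψ = |↑↑...↑⟩ on N spin-1/2 sites such that for every single-site operator O, the off-diagonal matrix element ⟨ψ, O ψ'⟩ vanishes and the diagonal elements agree: ⟨ψ, Oψ⟩ = ⟨ψ', Oψ'⟩; i.e., the all-up product state has no topologically ordered partner even with respect to single-site operators, provided N ≥ 1. Concretely: for any unit ψ' ⟂ ψ there exists a site i and an operator O supported on site i with M(O; ψ, ψ') not a multiple of the identity. -/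
/-- The operator on `(ℂ²)^{⊗N}` (realized as `EuclideanSpace ℂ (Fin N → Fin 2)`)
acting as the 2×2 matrix `m` on site `i` and as the identity elsewhere. -/
noncomputable def siteOp (N : ℕ) (i : Fin N) (m : Matrix (Fin 2) (Fin 2) ℂ) :
    EuclideanSpace ℂ (Fin N → Fin 2) →L[ℂ] EuclideanSpace ℂ (Fin N → Fin 2) :=
  Matrix.toEuclideanCLM (𝕜 := ℂ)
    (Matrix.of fun c c' => if ∀ j, j ≠ i → c j = c' j then m (c i) (c' i) else 0)

/-- The all-spins-up product state `|↑↑⋯↑⟩`. -/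
noncomputable def allUp (N : ℕ) : EuclideanSpace ℂ (Fin N → Fin 2) :=
  EuclideanSpace.single (fun _ => (0 : Fin 2)) (1 : ℂ)

lemma siteOp_apply (N : ℕ) (i : Fin N) (m : Matrix (Fin 2) (Fin 2) ℂ)
    (x : EuclideanSpace ℂ (Fin N → Fin 2)) (c : Fin N → Fin 2) :
    siteOp N i m x c =
      ∑ c' : Fin N → Fin 2,
        (if ∀ j, j ≠ i → c j = c' j then m (c i) (c' i) else 0) * x c' := by
  have := congrFun (Matrix.ofLp_toEuclideanCLM (𝕜 := ℂ)
    (Matrix.of fun c c' => if ∀ j, j ≠ i → c j = c' j then m (c i) (c' i) else 0) x) c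
  simpa only [siteOp, Matrix.mulVec, dotProduct, Matrix.of_apply] using this

noncomputable def projUp : Matrix (Fin 2) (Fin 2) ℂ :=
  Matrix.of fun a b => if a = 0 ∧ b = 0 then 1 else 0

lemma siteOp_projUp_apply (N : ℕ) (i : Fin N)
    (x : EuclideanSpace ℂ (Fin N → Fin 2)) (c : Fin N → Fin 2) :
    siteOp N i projUp x c = if c i = 0 then x c else 0 := by
  rw [siteOp_apply]
  rw [Finset.sum_eq_single_of_mem c (Finset.mem_univ c)]
  · by_cases h : c i = 0 <;> simp [projUp, h]
  · intro c' _ hne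
    by_cases hall : ∀ j, j ≠ i → c j = c' j
    · simp only [if_pos hall, projUp, Matrix.of_apply]
      rw [if_neg, zero_mul]
      rintro ⟨h1, h2⟩
      apply hne
      funext j
      by_cases hj : j = i
      · rw [hj, h2, h1]
      · exact (hall j hj).symm
    · simp [hall]


/-- The all-up product state has no topologically ordered partner, even with
respect to single-site operators: for every unit `ψ'` orthogonal to
`ψ = |↑⋯↑⟩` there are a site `i` and a single-site operator `O = siteOp N i m`
whose 2×2 matrix in `{ψ, ψ'}` is not a multiple of the identity, i.e. it is
impossible that `⟨ψ, Oψ'⟩ = 0`, `⟨ψ', Oψ⟩ = 0` and `⟨ψ, Oψ⟩ = ⟨ψ', Oψ'⟩` all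
hold. -/
theorem no_topological_partner_of_product_state (N : ℕ) (hN : 1 ≤ N)
    (ψ' : EuclideanSpace ℂ (Fin N → Fin 2)) (hψ' : ‖ψ'‖ = 1)
    (horth : (inner ℂ (allUp N) ψ' : ℂ) = 0) :
    ∃ (i : Fin N) (m : Matrix (Fin 2) (Fin 2) ℂ),
      ¬ ((inner ℂ (allUp N) (siteOp N i m ψ') : ℂ) = 0 ∧
         (inner ℂ ψ' (siteOp N i m (allUp N)) : ℂ) = 0 ∧
         (inner ℂ (allUp N) (siteOp N i m (allUp N)) : ℂ) =
           (inner ℂ ψ' (siteOp N i m ψ') : ℂ)) := by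
  by_contra hcon
  push_neg at hcon
  set c₀ : Fin N → Fin 2 := fun _ => 0 with hc₀
  -- ψ' vanishes off c₀
  have hvanish : ∀ c : Fin N → Fin 2, c ≠ c₀ → ψ' c = 0 := by
    intro c hc
    have : ∃ i, c i ≠ 0 := by
      by_contra hall
      push_neg at hall
      exact hc (funext hall)
    obtain ⟨i, hi⟩ := this
    obtain ⟨-, -, hdiag⟩ := hcon i projUp
    -- compute both sides
    have hL : (inner ℂ (allUp N) (siteOp N i projUp (allUp N)) : ℂ) = 1 := by
      rw [allUp, EuclideanSpace.inner_single_left, siteOp_projUp_apply]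
      simp [allUp]
    have hR : (inner ℂ ψ' (siteOp N i projUp ψ') : ℂ) =
        ∑ c : Fin N → Fin 2, if c i = 0 then (Complex.normSq (ψ' c) : ℂ) else 0 := by
      rw [PiLp.inner_apply]
      congr 1
      funext c
      rw [siteOp_projUp_apply]
      by_cases h : c i = 0 <;> simp [h, Complex.normSq_eq_conj_mul_self, Complex.conj_mul']
    have hnorm : (∑ c : Fin N → Fin 2, (Complex.normSq (ψ' c) : ℂ)) = 1 := by
      have h2 : (inner ℂ ψ' ψ' : ℂ) = 1 := by
        rw [inner_self_eq_norm_sq_to_K, hψ']; norm_num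
      rw [PiLp.inner_apply] at h2
      rw [← h2]
      congr 1
      funext c
      rw [RCLike.inner_apply, Complex.normSq_eq_conj_mul_self, mul_comm]
    -- so the sum over c with c i ≠ 0 vanishes
    have hzero : (∑ c : Fin N → Fin 2,
        if c i ≠ 0 then (Complex.normSq (ψ' c) : ℂ) else 0) = 0 := by
      have := hdiag
      rw [hL, hR] at this
      have hsplit : (∑ c : Fin N → Fin 2, if c i = 0 then (Complex.normSq (ψ' c) : ℂ) else 0)
          + (∑ c : Fin N → Fin 2, if c i ≠ 0 then (Complex.normSq (ψ' c) : ℂ) else 0)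
          = ∑ c : Fin N → Fin 2, (Complex.normSq (ψ' c) : ℂ) := by
        rw [← Finset.sum_add_distrib]
        congr 1
        funext c
        by_cases h : c i = 0 <;> simp [h]
      rw [← this, hnorm] at hsplit
      linear_combination hsplit
    -- real nonneg sum is zero termwise
    have hreal : (∑ c : Fin N → Fin 2,
        if c i ≠ 0 then Complex.normSq (ψ' c) else 0) = 0 := by
      have h3 : ((∑ c : Fin N → Fin 2,
          if c i ≠ 0 then Complex.normSq (ψ' c) else 0 : ℝ) : ℂ) = 0 := by
        rw [Complex.ofReal_sum]
        simpa [apply_ite (Complex.ofReal)] using hzero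
      exact_mod_cast h3
    have := (Finset.sum_eq_zero_iff_of_nonneg (fun c _ => by split <;> simp [Complex.normSq_nonneg])).mp hreal
      c (Finset.mem_univ c)
    rw [if_pos hi] at this
    exact Complex.normSq_eq_zero.mp this
  -- and ψ' c₀ = 0 from orthogonality
  have hc0 : ψ' c₀ = 0 := by
    rw [allUp, EuclideanSpace.inner_single_left] at horth
    simpa using horth
  have : ψ' = 0 := by
    ext c
    by_cases h : c = c₀
    · rw [h]; exact hc0
    · exact hvanish c h
  rw [this, norm_zero] at hψ'
  norm_num at hψ'
end
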